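/- Let k, γ > 0 and set φ(γ) := ∫₀^∞ f(τ)·e^{−γτ} dτ. Consider the scalar recursion m_s = (1/2)·[φ(γ)·m_{s−1} + (k/γ)·(1 − φ(γ))], modeling the mean gene-product level just after each cell division (synthesis rate k, degradation rate γ, perfect halving at division). Then m_s converges for every initial value m₀, and the steady-state mean x̄ := ∫₀^∞ p(τ)·[e^{−γτ}·lim_{s→∞} m_s + (k/γ)·(1 − e^{−γτ})] dτ equals k/γ − (k/(2γ²m₁))·(1 − φ(γ))/(1 − φ(γ)/2). (Equation (40): mean gene product level for random cell-cycle times.) -/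

import Mathlib

open MeasureTheory Filter

/-- **Equation (40): mean gene product level for random cell-cycle times.** -/
theorem gene_product_mean
    (f : ℝ → ℝ) (hf_cont : Continuous f)
    (hf_pos : ∀ τ : ℝ, 0 < τ → 0 < f τ) (hf_supp : ∀ τ : ℝ, τ ≤ 0 → f τ = 0)
    (hf_prob : ∫ τ in Set.Ioi (0:ℝ), f τ = 1)
    (S : ℝ → ℝ) (hS : ∀ τ : ℝ, S τ = 1 - ∫ y in (0:ℝ)..τ, f y)
    (m₁ : ℝ) (hm₁ : m₁ = ∫ τ in Set.Ioi (0:ℝ), τ * f τ)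
    (hm₁_int : IntegrableOn (fun τ : ℝ => τ * f τ) (Set.Ioi 0))
    (hm₁_pos : 0 < m₁)
    (p : ℝ → ℝ) (hp : ∀ τ : ℝ, p τ = S τ / m₁)
    (k γ : ℝ) (hk : 0 < k) (hγ : 0 < γ)
    (φ : ℝ) (hφ : φ = ∫ τ in Set.Ioi (0:ℝ), f τ * Real.exp (-γ * τ)) :
    ∀ m : ℕ → ℝ,
      (∀ s : ℕ, m (s + 1) = (1 / 2) * (φ * m s + (k / γ) * (1 - φ))) →
      ∃ L : ℝ, Tendsto m atTop (nhds L) ∧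
        (∫ τ in Set.Ioi (0:ℝ),
            p τ * (Real.exp (-γ * τ) * L + (k / γ) * (1 - Real.exp (-γ * τ)))) =
          k / γ - (k / (2 * γ ^ 2 * m₁)) * ((1 - φ) / (1 - φ / 2)) := by
  intro m hm
  have hγ' : γ ≠ 0 := ne_of_gt hγ
  have hm₁' : m₁ ≠ 0 := ne_of_gt hm₁_pos
  have hf_nonneg : ∀ τ : ℝ, 0 ≤ f τ := by
    intro τ
    rcases le_or_gt τ 0 with h | h
    · rw [hf_supp τ h]
    · exact (hf_pos τ h).le
  have hf_int : IntegrableOn f (Set.Ioi 0) := by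
    by_contra h
    rw [integral_undef h] at hf_prob
    norm_num at hf_prob
  have hfe_cont : Continuous (fun τ : ℝ => f τ * Real.exp (-γ * τ)) := by
    fun_prop
  have hexp_le_one : ∀ τ : ℝ, 0 ≤ τ → Real.exp (-γ * τ) ≤ 1 := by
    intro τ hτ
    rw [Real.exp_le_one_iff]
    nlinarith
  have hfe_int : IntegrableOn (fun τ : ℝ => f τ * Real.exp (-γ * τ)) (Set.Ioi 0) := by
    apply hf_int.mono' hfe_cont.aestronglyMeasurable
    filter_upwards [ae_restrict_mem measurableSet_Ioi] with τ hτ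
    rw [Real.norm_eq_abs, abs_mul, abs_of_nonneg (hf_nonneg τ),
      abs_of_nonneg (Real.exp_pos _).le]
    exact mul_le_of_le_one_right (hf_nonneg τ) (hexp_le_one τ (le_of_lt hτ))
  have hφ_nonneg : 0 ≤ φ := by
    rw [hφ]
    exact setIntegral_nonneg measurableSet_Ioi fun τ _ =>
      mul_nonneg (hf_nonneg τ) (Real.exp_pos _).le
  have hφ_le_one : φ ≤ 1 := by
    rw [hφ, ← hf_prob]
    exact setIntegral_mono_on hfe_int hf_int measurableSet_Ioi fun τ hτ =>
      mul_le_of_le_one_right (hf_nonneg τ) (hexp_le_one τ (le_of_lt hτ))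
  have h2φ : (0:ℝ) < 2 - φ := by linarith
  have h2φ' : (2:ℝ) - φ ≠ 0 := ne_of_gt h2φ
  -- the limit of the recursion
  set L : ℝ := (k / γ) * ((1 - φ) / (2 - φ)) with hL
  have hfix : L = (1 / 2) * (φ * L + (k / γ) * (1 - φ)) := by
    rw [hL]; field_simp; ring
  have hclosed : ∀ s : ℕ, m s - L = (φ / 2) ^ s * (m 0 - L) := by
    intro s
    induction s with
    | zero => simp
    | succ n ih =>
      have : m (n + 1) - L = (φ / 2) * (m n - L) := by
        linear_combination (hm n) - hfix
      rw [this, ih, pow_succ]; ring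
  have htend : Tendsto m atTop (nhds L) := by
    have h0 : Tendsto (fun s : ℕ => (φ / 2) ^ s) atTop (nhds 0) :=
      tendsto_pow_atTop_nhds_zero_of_lt_one (by linarith) (by linarith)
    have h1 : Tendsto (fun s : ℕ => (φ / 2) ^ s * (m 0 - L) + L) atTop
        (nhds (0 * (m 0 - L) + L)) := (h0.mul_const _).add_const L
    have h2 : Tendsto (fun s : ℕ => (φ / 2) ^ s * (m 0 - L) + L) atTop (nhds L) := by
      simpa using h1
    exact h2.congr fun s => by have := hclosed s; linarith
  refine ⟨L, htend, ?_⟩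
  -- basic facts about S
  have hS_tail : ∀ T : ℝ, 0 ≤ T → S T = ∫ y in Set.Ioi T, f y := by
    intro T hT
    have hsplit : ∫ y in Set.Ioi (0:ℝ), f y =
        (∫ y in Set.Ioc (0:ℝ) T, f y) + ∫ y in Set.Ioi T, f y := by
      rw [← Set.Ioc_union_Ioi_eq_Ioi hT]
      exact setIntegral_union (Set.Ioc_disjoint_Ioi le_rfl) measurableSet_Ioi
        (hf_int.mono_set Set.Ioc_subset_Ioi_self)
        (hf_int.mono_set (Set.Ioi_subset_Ioi hT))
    rw [hS, intervalIntegral.integral_of_le hT]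
    rw [hf_prob] at hsplit
    linarith
  have hS_nonneg : ∀ T : ℝ, 0 ≤ T → 0 ≤ S T := by
    intro T hT
    rw [hS_tail T hT]
    exact setIntegral_nonneg measurableSet_Ioi fun τ _ => hf_nonneg τ
  have hS_le_one : ∀ T : ℝ, 0 ≤ T → S T ≤ 1 := by
    intro T hT
    rw [hS T]
    have : 0 ≤ ∫ y in (0:ℝ)..T, f y :=
      intervalIntegral.integral_nonneg hT fun y _ => hf_nonneg y
    linarith
  have hS_cont : Continuous S := by
    have h1 : Continuous fun τ : ℝ => ∫ y in (0:ℝ)..τ, f y :=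
      intervalIntegral.continuous_primitive (fun a b => hf_cont.intervalIntegrable a b) 0
    have h2 : Continuous fun τ : ℝ => 1 - ∫ y in (0:ℝ)..τ, f y := continuous_const.sub h1
    exact h2.congr fun τ => (hS τ).symm
  have hS_lim : Tendsto S atTop (nhds 0) := by
    have h1 : Tendsto (fun T : ℝ => ∫ y in (0:ℝ)..T, f y) atTop (nhds 1) := by
      have := intervalIntegral_tendsto_integral_Ioi 0 hf_int (tendsto_id (α := ℝ))
      rwa [hf_prob] at this
    have h2 : Tendsto (fun T : ℝ => 1 - ∫ y in (0:ℝ)..T, f y) atTop (nhds (1 - 1)) :=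
      tendsto_const_nhds.sub h1
    simp only [sub_self] at h2
    exact h2.congr fun T => (hS T).symm
  have hS_deriv : ∀ x : ℝ, HasDerivAt S (-f x) x := by
    intro x
    have h1 : HasDerivAt (fun τ : ℝ => ∫ y in (0:ℝ)..τ, f y) (f x) x :=
      intervalIntegral.integral_hasDerivAt_right (hf_cont.intervalIntegrable 0 x)
        (hf_cont.stronglyMeasurableAtFilter _ _) hf_cont.continuousAt
    have h2 : HasDerivAt (fun τ : ℝ => 1 - ∫ y in (0:ℝ)..τ, f y) (-f x) x := h1.const_sub 1
    exact h2.congr_of_eventuallyEq (Eventually.of_forall hS)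
  have hexp_deriv : ∀ x : ℝ, HasDerivAt (fun τ : ℝ => Real.exp (-γ * τ))
      (Real.exp (-γ * x) * -γ) x := by
    intro x
    have h1 : HasDerivAt (fun τ : ℝ => -γ * τ) (-γ) x := by
      simpa using (hasDerivAt_id x).const_mul (-γ)
    simpa using h1.exp
  have hexp_lim : Tendsto (fun T : ℝ => Real.exp (-γ * T)) atTop (nhds 0) := by
    have h1 : Tendsto (fun T : ℝ => γ * T) atTop atTop :=
      Tendsto.const_mul_atTop hγ tendsto_id
    exact (Real.tendsto_exp_neg_atTop_nhds_zero.comp h1).congr fun T => by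
      simp [Function.comp, neg_mul]
  -- key identity 1 : ∫ S = m₁
  have hsplit₁ : ∀ T : ℝ, 0 ≤ T → ∫ y in Set.Ioi T, y * f y =
      m₁ - ∫ y in (0:ℝ)..T, y * f y := by
    intro T hT
    have hsplit : ∫ y in Set.Ioi (0:ℝ), y * f y =
        (∫ y in Set.Ioc (0:ℝ) T, y * f y) + ∫ y in Set.Ioi T, y * f y := by
      rw [← Set.Ioc_union_Ioi_eq_Ioi hT]
      exact setIntegral_union (Set.Ioc_disjoint_Ioi le_rfl) measurableSet_Ioi
        (hm₁_int.mono_set Set.Ioc_subset_Ioi_self)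
        (hm₁_int.mono_set (Set.Ioi_subset_Ioi hT))
    rw [intervalIntegral.integral_of_le hT, hm₁]
    linarith
  have htail_lim : Tendsto (fun T : ℝ => ∫ y in Set.Ioi T, y * f y) atTop (nhds 0) := by
    have h1 : Tendsto (fun T : ℝ => ∫ y in (0:ℝ)..T, y * f y) atTop (nhds m₁) := by
      have := intervalIntegral_tendsto_integral_Ioi 0 hm₁_int (tendsto_id (α := ℝ))
      rwa [← hm₁] at this
    have h2 : Tendsto (fun T : ℝ => m₁ - ∫ y in (0:ℝ)..T, y * f y) atTop
        (nhds (m₁ - m₁)) := tendsto_const_nhds.sub h1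
    simp only [sub_self] at h2
    apply h2.congr' ?_
    filter_upwards [eventually_ge_atTop (0:ℝ)] with T hT
    exact (hsplit₁ T hT).symm
  have hTS_le : ∀ T : ℝ, 0 ≤ T → T * S T ≤ ∫ y in Set.Ioi T, y * f y := by
    intro T hT
    rw [hS_tail T hT, ← integral_const_mul]
    exact setIntegral_mono_on ((hf_int.mono_set (Set.Ioi_subset_Ioi hT)).const_mul T)
      (hm₁_int.mono_set (Set.Ioi_subset_Ioi hT)) measurableSet_Ioi
      (fun y hy => mul_le_mul_of_nonneg_right (le_of_lt hy) (hf_nonneg y))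
  have hTS_lim : Tendsto (fun T : ℝ => T * S T) atTop (nhds 0) := by
    apply squeeze_zero' ?_ ?_ htail_lim
    · filter_upwards [eventually_ge_atTop (0:ℝ)] with T hT
      exact mul_nonneg hT (hS_nonneg T hT)
    · filter_upwards [eventually_ge_atTop (0:ℝ)] with T hT
      exact hTS_le T hT
  have hIBP₁ : ∀ T : ℝ, 0 ≤ T → ∫ τ in (0:ℝ)..T, S τ =
      T * S T + ∫ y in (0:ℝ)..T, y * f y := by
    intro T hT
    have hG : ∀ x : ℝ, HasDerivAt
        (fun τ : ℝ => τ * S τ + ∫ y in (0:ℝ)..τ, y * f y) (S x) x := by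
      intro x
      have h1 : HasDerivAt (fun τ : ℝ => τ * S τ) (1 * S x + x * -f x) x :=
        (hasDerivAt_id x).mul (hS_deriv x)
      have h2 : HasDerivAt (fun τ : ℝ => ∫ y in (0:ℝ)..τ, y * f y) (x * f x) x :=
        intervalIntegral.integral_hasDerivAt_right
          ((continuous_id.mul hf_cont).intervalIntegrable 0 x)
          ((continuous_id.mul hf_cont).stronglyMeasurableAtFilter _ _)
          (continuous_id.mul hf_cont).continuousAt
      have := h1.add h2
      convert this using 1
      rfl
      rfl
      rfl
      ring
    have := intervalIntegral.integral_eq_sub_of_hasDerivAt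
      (f := fun τ : ℝ => τ * S τ + ∫ y in (0:ℝ)..τ, y * f y) (f' := S)
      (fun x _ => hG x) (hS_cont.intervalIntegrable 0 T)
    rw [this]
    simp
  have hS_intlim : Tendsto (fun T : ℝ => ∫ τ in (0:ℝ)..T, S τ) atTop (nhds m₁) := by
    have h1 : Tendsto (fun T : ℝ => ∫ y in (0:ℝ)..T, y * f y) atTop (nhds m₁) := by
      have := intervalIntegral_tendsto_integral_Ioi 0 hm₁_int (tendsto_id (α := ℝ))
      rwa [← hm₁] at this
    have h2 : Tendsto (fun T : ℝ => T * S T + ∫ y in (0:ℝ)..T, y * f y) atTop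
        (nhds (0 + m₁)) := hTS_lim.add h1
    rw [zero_add] at h2
    apply h2.congr' ?_
    filter_upwards [eventually_ge_atTop (0:ℝ)] with T hT
    exact (hIBP₁ T hT).symm
  have hS_int : IntegrableOn S (Set.Ioi 0) := by
    apply integrableOn_Ioi_of_intervalIntegral_norm_bounded m₁ 0
      (fun i : ℝ => hS_cont.integrableOn_Ioc) (tendsto_id (α := ℝ))
    filter_upwards [eventually_ge_atTop (0:ℝ)] with T hT
    simp only [id_eq]
    have hnorm : ∫ x in (0:ℝ)..T, ‖S x‖ = ∫ x in (0:ℝ)..T, S x := by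
      rw [intervalIntegral.integral_of_le hT, intervalIntegral.integral_of_le hT]
      apply setIntegral_congr_fun measurableSet_Ioc
      intro x hx
      exact Real.norm_of_nonneg (hS_nonneg x (le_of_lt hx.1))
    rw [hnorm, hIBP₁ T hT]
    have h1 := hTS_le T hT
    have h2 := hsplit₁ T hT
    linarith
  have hP : ∫ τ in Set.Ioi (0:ℝ), S τ = m₁ :=
    tendsto_nhds_unique (intervalIntegral_tendsto_integral_Ioi 0 hS_int (tendsto_id (α := ℝ)))
      hS_intlim
  -- key identity 2 : ∫ S e^{-γτ} = (1-φ)/γ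
  have hSe_cont : Continuous fun τ : ℝ => S τ * Real.exp (-γ * τ) := by
    fun_prop
  have hIBP₂ : ∀ T : ℝ, ∫ τ in (0:ℝ)..T, S τ * Real.exp (-γ * τ) =
      (1 - S T * Real.exp (-γ * T)) / γ
        - (1 / γ) * ∫ y in (0:ℝ)..T, f y * Real.exp (-γ * y) := by
    intro T
    have hG : ∀ x : ℝ, HasDerivAt
        (fun τ : ℝ => (1 - S τ * Real.exp (-γ * τ)) / γ
          - (1 / γ) * ∫ y in (0:ℝ)..τ, f y * Real.exp (-γ * y))
        (S x * Real.exp (-γ * x)) x := by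
      intro x
      have h1 : HasDerivAt (fun τ : ℝ => S τ * Real.exp (-γ * τ))
          (-f x * Real.exp (-γ * x) + S x * (Real.exp (-γ * x) * -γ)) x :=
        (hS_deriv x).mul (hexp_deriv x)
      have h2 : HasDerivAt (fun τ : ℝ => (1 - S τ * Real.exp (-γ * τ)) / γ)
          (-(-f x * Real.exp (-γ * x) + S x * (Real.exp (-γ * x) * -γ)) / γ) x :=
        (h1.const_sub 1).div_const γ
      have h3 : HasDerivAt (fun τ : ℝ => ∫ y in (0:ℝ)..τ, f y * Real.exp (-γ * y))
          (f x * Real.exp (-γ * x)) x :=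
        intervalIntegral.integral_hasDerivAt_right (hfe_cont.intervalIntegrable 0 x)
          (hfe_cont.stronglyMeasurableAtFilter _ _) hfe_cont.continuousAt
      have := h2.sub (h3.const_mul (1 / γ))
      convert this using 1
      rfl
      rfl
      rfl
      field_simp
      ring
    have hS0 : S 0 = 1 := by rw [hS]; simp
    have := intervalIntegral.integral_eq_sub_of_hasDerivAt
      (f' := fun τ : ℝ => S τ * Real.exp (-γ * τ))
      (fun x _ => hG x) (hSe_cont.intervalIntegrable 0 T)
    rw [this]
    simp [hS0]
  have hSe_intlim : Tendsto (fun T : ℝ => ∫ τ in (0:ℝ)..T, S τ * Real.exp (-γ * τ)) atTop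
      (nhds ((1 - φ) / γ)) := by
    have h1 : Tendsto (fun T : ℝ => ∫ y in (0:ℝ)..T, f y * Real.exp (-γ * y)) atTop
        (nhds φ) := by
      have := intervalIntegral_tendsto_integral_Ioi 0 hfe_int (tendsto_id (α := ℝ))
      rwa [← hφ] at this
    have hSe_lim : Tendsto (fun T : ℝ => S T * Real.exp (-γ * T)) atTop (nhds 0) := by
      have := hS_lim.mul hexp_lim
      simpa using this
    have h2 : Tendsto (fun T : ℝ => (1 - S T * Real.exp (-γ * T)) / γ
        - (1 / γ) * ∫ y in (0:ℝ)..T, f y * Real.exp (-γ * y)) atTop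
        (nhds ((1 - 0) / γ - (1 / γ) * φ)) :=
      ((tendsto_const_nhds.sub hSe_lim).div_const γ).sub (h1.const_mul (1 / γ))
    have h3 : (1 - (0:ℝ)) / γ - (1 / γ) * φ = (1 - φ) / γ := by field_simp; ring
    rw [h3] at h2
    exact h2.congr fun T => (hIBP₂ T).symm
  have hexp_int : IntegrableOn (fun τ : ℝ => Real.exp (-γ * τ)) (Set.Ioi 0) :=
    exp_neg_integrableOn_Ioi 0 hγ
  have hSe_int : IntegrableOn (fun τ : ℝ => S τ * Real.exp (-γ * τ)) (Set.Ioi 0) := by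
    apply hexp_int.mono' hSe_cont.aestronglyMeasurable
    filter_upwards [ae_restrict_mem measurableSet_Ioi] with τ hτ
    rw [Real.norm_eq_abs, abs_mul, abs_of_nonneg (hS_nonneg τ (le_of_lt hτ)),
      abs_of_nonneg (Real.exp_pos _).le]
    exact mul_le_of_le_one_left (Real.exp_pos _).le (hS_le_one τ (le_of_lt hτ))
  have hQ : ∫ τ in Set.Ioi (0:ℝ), S τ * Real.exp (-γ * τ) = (1 - φ) / γ :=
    tendsto_nhds_unique
      (intervalIntegral_tendsto_integral_Ioi 0 hSe_int (tendsto_id (α := ℝ))) hSe_intlim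
  -- final computation
  have hkey : ∀ τ : ℝ, p τ * (Real.exp (-γ * τ) * L + (k / γ) * (1 - Real.exp (-γ * τ)))
      = (k / (γ * m₁)) * S τ + ((L - k / γ) / m₁) * (S τ * Real.exp (-γ * τ)) := by
    intro τ
    rw [hp]
    field_simp
    ring
  calc (∫ τ in Set.Ioi (0:ℝ),
          p τ * (Real.exp (-γ * τ) * L + (k / γ) * (1 - Real.exp (-γ * τ))))
      = ∫ τ in Set.Ioi (0:ℝ),
          ((k / (γ * m₁)) * S τ + ((L - k / γ) / m₁) * (S τ * Real.exp (-γ * τ))) :=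
        integral_congr_ae (Eventually.of_forall hkey)
    _ = (k / (γ * m₁)) * (∫ τ in Set.Ioi (0:ℝ), S τ)
          + ((L - k / γ) / m₁) * ∫ τ in Set.Ioi (0:ℝ), S τ * Real.exp (-γ * τ) := by
        rw [integral_add (hS_int.const_mul _) (hSe_int.const_mul _),
          integral_const_mul, integral_const_mul]
    _ = k / γ - (k / (2 * γ ^ 2 * m₁)) * ((1 - φ) / (1 - φ / 2)) := by
        rw [hP, hQ, hL]
        have h1φ : (1:ℝ) - φ / 2 ≠ 0 := by intro h; apply h2φ'; linarith
        field_simp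
        ring
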